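/- If x = y, then for every μ ∈ ℰ(A) which is not the point mass on the constant sequence of x's, for μ-a.e. w ∈ A^ℤ, lim_{n→∞} n/|G(w_1…w_n)| = 1/(1 − Σ_{k=2}^{∞} (−1)^k μ(x^k)), where x^k denotes the word consisting of k copies of x. -/

import Mathlib

open MeasureTheory Filter Topology

instance optionMeasurableSpace {A : Type*} [MeasurableSpace A] : MeasurableSpace (Option A) :=
  MeasurableSpace.comap (Option.elim' (Sum.inr ()) Sum.inl : Option A → A ⊕ Unit) inferInstance

/-- Left-to-right non-overlapping substitution of the pair `x y` by a new symbol `none`. -/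
def pairSubst {A : Type*} [DecidableEq A] (x y : A) : List A → List (Option A)
  | [] => []
  | [a] => [some a]
  | a :: b :: l =>
      if a = x ∧ b = y then none :: pairSubst x y l
      else some a :: pairSubst x y (b :: l)

/-- Substitution of every occurrence of `none` by the pair `x y`. -/
def pairExpand {A : Type*} (x y : A) : List (Option A) → List A
  | [] => []
  | none :: l => x :: y :: pairExpand x y l
  | some a :: l => a :: pairExpand x y l

/-- Number of (possibly overlapping) occurrences of `s` as a contiguous subword of `r`. -/
def occ {B : Type*} [DecidableEq B] (s r : List B) : ℕ :=
  (List.range r.length).countP (fun i => decide (s <+: r.drop i))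

/-- The word `w₁ … wₙ` read out of a two-sided sequence. -/
def wordOf {B : Type*} (w : ℤ → B) (n : ℕ) : List B :=
  (List.range n).map (fun i => w (i : ℤ))

/-- The cylinder set determined by a word. -/
def cyl {B : Type*} (s : List B) : Set (ℤ → B) :=
  {x | ∀ i : Fin s.length, x ((i : ℕ) : ℤ) = s.get i}

/-- The shift map on two-sided sequences. -/
def shift {B : Type*} : (ℤ → B) → (ℤ → B) := fun x i => x (i + 1)

/-- The `n`-block entropy of a measure on `B^ℤ` (base-2 logarithms). -/
noncomputable def blockH {B : Type*} [Fintype B] [MeasurableSpace B]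
    (μ : Measure (ℤ → B)) (n : ℕ) : ℝ :=
  -∑ z : Fin n → B,
    (μ {x : ℤ → B | ∀ i : Fin n, x ((i : ℕ) : ℤ) = z i}).toReal *
      Real.logb 2 ((μ {x : ℤ → B | ∀ i : Fin n, x ((i : ℕ) : ℤ) = z i}).toReal)

/-- `k`-Markov property (stated with cross-multiplied conditional probabilities). -/
def IsKMarkov {B : Type*} [MeasurableSpace B] (μ : Measure (ℤ → B)) (k : ℕ) : Prop :=
  ∀ w : List B, k ≤ w.length → μ (cyl w) ≠ 0 → ∀ a : B,
    μ (cyl (w ++ [a])) * μ (cyl (w.drop (w.length - k))) =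
      μ (cyl (w.drop (w.length - k) ++ [a])) * μ (cyl w)



set_option linter.unusedSectionVars false
set_option maxHeartbeats 1000000

section Lists
variable {A : Type*} [DecidableEq A] (x : A)

def rho : List A → ℕ
  | [] => 0
  | a :: t => if a = x then rho t + 1 else 0

def chi (u : List A) : ℕ := if Even (rho x u) ∧ rho x u ≠ 0 then 1 else 0

def RR : List A → ℕ
  | [] => 0
  | a :: t => chi x (a :: t) + RR t

lemma chi_le_one (u : List A) : chi x u ≤ 1 := by
  unfold chi; split <;> simp

lemma chi_xx (l : List A) : chi x (x :: x :: l) + chi x (x :: l) = 1 := by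
  have h1 : rho x (x :: x :: l) = rho x l + 2 := by simp [rho]
  have h2 : rho x (x :: l) = rho x l + 1 := by simp [rho]
  unfold chi
  rw [h1, h2]
  rcases Nat.even_or_odd (rho x l) with h | h
  · rw [if_pos, if_neg]
    · simp [Nat.even_add_one, Nat.even_add, h]
    · exact ⟨by simpa [Nat.even_add] using h, by omega⟩
  · rw [if_neg, if_pos]
    · exact ⟨by simpa [Nat.even_add_one, Nat.even_add] using h, by omega⟩
    · rintro ⟨he, -⟩
      have : Even (rho x l) := by simpa [Nat.even_add] using he
      exact (Nat.not_even_iff_odd.mpr h) this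
  
lemma chi_ne {a b : A} (l : List A) (h : ¬(a = x ∧ b = x)) : chi x (a :: b :: l) = 0 := by
  by_cases ha : a = x
  · have hb : b ≠ x := fun hb => h ⟨ha, hb⟩
    have : rho x (a :: b :: l) = 1 := by simp [rho, ha, hb]
    simp [chi, this]
  · have : rho x (a :: b :: l) = 0 := by simp [rho, ha]
    simp [chi, this]

lemma pairSubst_len (u : List A) : (pairSubst x x u).length + RR x u = u.length := by
  induction u using pairSubst.induct x x with
  | case1 => simp [pairSubst, RR]
  | case2 a => simp [pairSubst, RR, chi, rho]; split <;> simp_all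
  | case3 a b l h ih =>
    obtain ⟨ha, hb⟩ := h
    rw [ha, hb, pairSubst, if_pos ⟨rfl, rfl⟩]
    show (pairSubst x x l).length + 1 + RR x (x :: x :: l) = (x::x::l).length
    rw [RR, RR]
    have := chi_xx x l
    simp only [List.length_cons]
    omega
  | case4 a b l h ih =>
    rw [pairSubst, if_neg h]
    show (pairSubst x x (b :: l)).length + 1 + RR x (a :: b :: l) = (b::l).length + 1
    rw [RR, chi_ne x l h]
    omega


lemma rho_get (v : List A) : ∀ k, k < rho x v → v[k]? = some x := by
  induction v with
  | nil => simp [rho]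
  | cons a t ih =>
    intro k hk
    by_cases ha : a = x
    · simp only [rho, if_pos ha] at hk
      cases k with
      | zero => simp [ha]
      | succ k => exact (by simpa using ih k (by omega))
    · simp [rho, ha] at hk

lemma rho_get_ne (v : List A) : v[rho x v]? ≠ some x := by
  induction v with
  | nil => simp [rho]
  | cons a t ih =>
    by_cases ha : a = x
    · simpa [rho, ha] using ih
    · simp [rho, ha]

lemma rho_unique (v : List A) {m : ℕ} (h1 : ∀ k, k < m → v[k]? = some x)
    (h2 : v[m]? ≠ some x) : m = rho x v := by
  rcases lt_trichotomy m (rho x v) with h | h | h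
  · exact absurd (rho_get x v m h) h2
  · exact h
  · exact absurd (h1 _ h) (rho_get_ne x v)

lemma chi_eq_one_iff (v : List A) : chi x v = 1 ↔
    ∃ m, Even m ∧ m ≠ 0 ∧ (∀ k, k < m → v[k]? = some x) ∧ v[m]? ≠ some x := by
  constructor
  · intro h
    have h' : Even (rho x v) ∧ rho x v ≠ 0 := by
      by_contra hc; simp [chi, hc] at h
    exact ⟨rho x v, h'.1, h'.2, rho_get x v, rho_get_ne x v⟩
  · rintro ⟨m, hme, hm0, h1, h2⟩
    have := rho_unique x v h1 h2
    simp [chi, ← this, hme, hm0]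

lemma RR_eq_sum (u : List A) : RR x u = ∑ i ∈ Finset.range u.length, chi x (u.drop i) := by
  induction u with
  | nil => simp [RR]
  | cons a t ih =>
    rw [RR, ih, List.length_cons, Finset.sum_range_succ']
    simp [List.drop_succ_cons]
    ring

lemma pairSubst_pos (u : List A) (h : u ≠ []) : 0 < (pairSubst x x u).length := by
  match u with
  | [a] => simp [pairSubst]
  | a :: b :: l =>
    rw [pairSubst]
    split <;> simp

end Lists

section Birkhoff
variable {α : Type*} [MeasurableSpace α] {T : α → α} {μ : Measure α}

/-- running maximum of Birkhoff sums `S_1, ..., S_N` and `0`. -/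
noncomputable def maxS (T : α → α) (g : α → ℝ) : ℕ → α → ℝ
  | 0 => fun _ => 0
  | N + 1 => fun z => max (maxS T g N z) (birkhoffSum T g (N + 1) z)

lemma maxS_nonneg (g : α → ℝ) (N : ℕ) (z : α) : 0 ≤ maxS T g N z := by
  induction N with
  | zero => simp [maxS]
  | succ N ih => exact le_trans ih (le_max_left _ _)

lemma maxS_mono (g : α → ℝ) (z : α) : Monotone (fun N => maxS T g N z) := by
  apply monotone_nat_of_le_succ
  intro N; exact le_max_left _ _

lemma le_maxS (g : α → ℝ) (N : ℕ) (z : α) : ∀ n, n ≤ N → birkhoffSum T g n z ≤ maxS T g N z := by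
  induction N with
  | zero => intro n hn; interval_cases n; simp [birkhoffSum, maxS]
  | succ N ih =>
    intro n hn
    rcases Nat.lt_succ_iff_lt_or_eq.mp (Nat.lt_succ_of_le hn) with h | h
    · exact le_trans (ih n (by omega)) (le_max_left _ _)
    · rw [h]; exact le_max_right _ _

lemma maxS_attained (g : α → ℝ) (N : ℕ) (z : α) (h : 0 < maxS T g N z) :
    ∃ n, 1 ≤ n ∧ n ≤ N ∧ maxS T g N z = birkhoffSum T g n z := by
  induction N with
  | zero => simp [maxS] at h
  | succ N ih =>
    simp only [maxS] at h ⊢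
    rcases le_or_gt (birkhoffSum T g (N + 1) z) (maxS T g N z) with hle | hlt
    · rw [max_eq_left hle] at h ⊢
      obtain ⟨n, h1, h2, h3⟩ := ih h
      exact ⟨n, h1, by omega, h3⟩
    · rw [max_eq_right hlt.le]
      exact ⟨N + 1, by omega, le_rfl, rfl⟩

lemma measurable_birkhoffSum {g : α → ℝ} (hg : Measurable g) (hT : Measurable T) (n : ℕ) :
    Measurable (birkhoffSum T g n) := by
  unfold birkhoffSum
  exact Finset.measurable_sum _ (fun i _ => hg.comp (hT.iterate i))

lemma measurable_maxS {g : α → ℝ} (hg : Measurable g) (hT : Measurable T) (N : ℕ) :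
    Measurable (maxS T g N) := by
  induction N with
  | zero => simpa [maxS] using measurable_const
  | succ N ih => exact ih.max (measurable_birkhoffSum hg hT (N + 1))

lemma abs_birkhoffSum_le {g : α → ℝ} {C : ℝ} (hb : ∀ z, |g z| ≤ C) (n : ℕ) (z : α) :
    |birkhoffSum T g n z| ≤ n * C := by
  unfold birkhoffSum
  calc |∑ i ∈ Finset.range n, g (T^[i] z)| ≤ ∑ i ∈ Finset.range n, |g (T^[i] z)| :=
        Finset.abs_sum_le_sum_abs _ _
    _ ≤ ∑ _i ∈ Finset.range n, C := Finset.sum_le_sum (fun i _ => hb _)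
    _ = n * C := by simp [mul_comm]

lemma abs_maxS_le {g : α → ℝ} {C : ℝ} (hC : 0 ≤ C) (hb : ∀ z, |g z| ≤ C) (N : ℕ) (z : α) :
    |maxS T g N z| ≤ N * C := by
  rw [abs_of_nonneg (maxS_nonneg g N z)]
  induction N with
  | zero => simp [maxS]
  | succ N ih =>
    rw [maxS]
    apply max_le
    · exact le_trans ih (by push_cast; nlinarith)
    · exact le_trans (le_abs_self _) (abs_birkhoffSum_le hb (N + 1) z)

lemma integrable_of_bounded {g : α → ℝ} [IsProbabilityMeasure μ] (hg : Measurable g)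
    {C : ℝ} (hb : ∀ z, |g z| ≤ C) : Integrable g μ :=
  Integrable.mono' (integrable_const C) hg.aestronglyMeasurable (ae_of_all _ hb)

/-- The maximal ergodic theorem. -/
lemma maximal_ergodic [IsProbabilityMeasure μ] (hT : MeasurePreserving T μ μ)
    {g : α → ℝ} (hg : Measurable g) {C : ℝ} (hC : 0 ≤ C) (hb : ∀ z, |g z| ≤ C) (N : ℕ) :
    0 ≤ ∫ z in {z | 0 < maxS T g N z}, g z ∂μ := by
  set M : α → ℝ := maxS T g N with hM
  have hMmeas : Measurable M := measurable_maxS hg hT.measurable N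
  have hMTmeas : Measurable (fun z => M (T z)) := hMmeas.comp hT.measurable
  set A : Set α := {z | 0 < M z} with hA
  have hAmeas : MeasurableSet A := measurableSet_lt measurable_const hMmeas
  have hgInt : Integrable g μ := integrable_of_bounded hg hb
  have hMInt : Integrable M μ := integrable_of_bounded hMmeas (abs_maxS_le hC hb N)
  have hMTInt : Integrable (fun z => M (T z)) μ :=
    integrable_of_bounded hMTmeas (fun z => abs_maxS_le hC hb N (T z))
  -- pointwise inequality on A
  have hpt : ∀ z ∈ A, M z - M (T z) ≤ g z := by
    intro z hz
    obtain ⟨n, h1, h2, h3⟩ := maxS_attained g N z hz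
    have hsucc : birkhoffSum T g n z = g z + birkhoffSum T g (n - 1) (T z) := by
      conv_lhs => rw [show n = (n - 1) + 1 by omega]
      exact birkhoffSum_succ' T g (n - 1) z
    have hle : birkhoffSum T g (n - 1) (T z) ≤ M (T z) := le_maxS g N (T z) (n - 1) (by omega)
    have h3' : M z = g z + birkhoffSum T g (n - 1) (T z) := by rw [hM, h3, hsucc]
    linarith
  -- integral inequality
  have step1 : ∫ z in A, (M z - M (T z)) ∂μ ≤ ∫ z in A, g z ∂μ :=
    setIntegral_mono_on (hMInt.sub hMTInt).integrableOn hgInt.integrableOn hAmeas hpt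
  have step2 : ∫ z in A, (M z - M (T z)) ∂μ = ∫ z in A, M z ∂μ - ∫ z in A, M (T z) ∂μ :=
    integral_sub hMInt.integrableOn hMTInt.integrableOn
  have step3 : ∫ z in A, M z ∂μ = ∫ z, M z ∂μ := by
    have hcompl : ∫ z in Aᶜ, M z ∂μ = 0 := by
      rw [setIntegral_congr_fun hAmeas.compl (g := fun _ => (0:ℝ))]
      · simp
      · intro z hz
        have h1 : ¬ 0 < M z := hz
        have h2 := maxS_nonneg (T := T) g N z
        simp only [hM]
        linarith
    have := integral_add_compl hAmeas hMInt
    linarith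
  have step4 : ∫ z in A, M (T z) ∂μ ≤ ∫ z, M (T z) ∂μ :=
    setIntegral_le_integral hMTInt (ae_of_all _ (fun z => maxS_nonneg g N (T z)))
  have step5 : ∫ z, M (T z) ∂μ = ∫ z, M z ∂μ := by
    rw [← integral_map hT.measurable.aemeasurable hMmeas.aestronglyMeasurable, hT.map_eq]
  linarith

lemma birkhoffSum_sub_const (g : α → ℝ) (q : ℝ) (n : ℕ) (w : α) :
    birkhoffSum T (fun z => g z - q) n w = birkhoffSum T g n w - n * q := by
  unfold birkhoffSum
  rw [Finset.sum_sub_distrib, Finset.sum_const, Finset.card_range, nsmul_eq_mul]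

/-- The set of points whose Birkhoff averages exceed `q` along a subsequence
(with some rational margin). -/
def Bset (T : α → α) (g : α → ℝ) (q : ℚ) : Set α :=
  {w | ∃ q' : ℚ, q < q' ∧ ∀ N : ℕ, ∃ n, N ≤ n ∧ (q' : ℝ) * n < birkhoffSum T g n w}

lemma Bset_measurable {g : α → ℝ} (hg : Measurable g) (hT : Measurable T) (q : ℚ) :
    MeasurableSet (Bset T g q) := by
  have : Bset T g q = ⋃ (q' : ℚ), ⋃ (_ : q < q'), ⋂ (N : ℕ), ⋃ (n : ℕ), ⋃ (_ : N ≤ n),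
      {w | (q' : ℝ) * n < birkhoffSum T g n w} := by
    ext w
    simp only [Bset, Set.mem_setOf_eq, Set.mem_iUnion, Set.mem_iInter, exists_prop]
  rw [this]
  refine MeasurableSet.iUnion (fun q' => MeasurableSet.iUnion (fun _ =>
    MeasurableSet.iInter (fun N => MeasurableSet.iUnion (fun n => MeasurableSet.iUnion (fun _ =>
      measurableSet_lt measurable_const (measurable_birkhoffSum hg hT n))))))

lemma Bset_invariant {g : α → ℝ} (hg0 : ∀ z, 0 ≤ g z) (hg1 : ∀ z, g z ≤ 1) (q : ℚ) :
    T ⁻¹' (Bset T g q) = Bset T g q := by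
  ext w
  simp only [Set.mem_preimage, Bset, Set.mem_setOf_eq]
  constructor
  · rintro ⟨q', hq', H⟩
    obtain ⟨q'', hq''₁, hq''₂⟩ := exists_rat_btwn hq'
    refine ⟨q'', hq''₁, fun N => ?_⟩
    obtain ⟨n₀, hn₀⟩ := exists_nat_ge ((q'' : ℝ) / ((q' : ℝ) - q''))
    obtain ⟨n, hnN, hn⟩ := H (max N n₀)
    have hdiff : (0:ℝ) < (q' : ℝ) - q'' := by
      have : (q'' : ℝ) < q' := by exact_mod_cast hq''₂
      linarith
    have hn₀' : (q'' : ℝ) ≤ n₀ * ((q' : ℝ) - q'') := by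
      rw [div_le_iff₀ hdiff] at hn₀; linarith
    have hnn₀ : (n₀ : ℝ) ≤ n := by exact_mod_cast le_trans (le_max_right N n₀) hnN
    refine ⟨n + 1, by omega, ?_⟩
    have hsucc : birkhoffSum T g (n + 1) w = g w + birkhoffSum T g n (T w) :=
      birkhoffSum_succ' T g n w
    have : (q'' : ℝ) * (n + 1) ≤ (q' : ℝ) * n := by nlinarith
    push_cast
    nlinarith [hg0 w]
  · rintro ⟨q', hq', H⟩
    obtain ⟨q'', hq''₁, hq''₂⟩ := exists_rat_btwn hq'
    refine ⟨q'', hq''₁, fun N => ?_⟩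
    obtain ⟨n₁, hn₁⟩ := exists_nat_ge ((1 - (q'' : ℝ)) / ((q' : ℝ) - q''))
    obtain ⟨n, hnN, hn⟩ := H (max (N + 1) n₁)
    have hdiff : (0:ℝ) < (q' : ℝ) - q'' := by
      have : (q'' : ℝ) < q' := by exact_mod_cast hq''₂
      linarith
    have hn₁' : (1 - (q'' : ℝ)) ≤ n₁ * ((q' : ℝ) - q'') := by
      rw [div_le_iff₀ hdiff] at hn₁; linarith
    have hnn₁ : (n₁ : ℝ) ≤ n := by exact_mod_cast le_trans (le_max_right _ _) hnN
    have hn1 : 1 ≤ n := le_trans (le_max_left _ _) hnN |>.trans' (by omega)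
    refine ⟨n - 1, by omega, ?_⟩
    have hsucc : birkhoffSum T g n w = g w + birkhoffSum T g (n - 1) (T w) := by
      conv_lhs => rw [show n = (n - 1) + 1 by omega]
      exact birkhoffSum_succ' T g (n - 1) w
    have hcast : ((n - 1 : ℕ) : ℝ) = (n : ℝ) - 1 := by
      rw [Nat.cast_sub hn1]; norm_num
    rw [hcast]
    nlinarith [hg1 w]

lemma Bset_null [IsProbabilityMeasure μ] (hT : Ergodic T μ)
    {g : α → ℝ} (hg : Measurable g) (hg0 : ∀ z, 0 ≤ g z) (hg1 : ∀ z, g z ≤ 1)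
    (q : ℚ) (hq : ∫ z, g z ∂μ < q) : μ (Bset T g q) = 0 := by
  have hB := Bset_measurable hg hT.toMeasurePreserving.measurable (g := g) q
  rcases hT.ae_empty_or_univ hB (Bset_invariant hg0 hg1 q) with h | h
  · exact ae_eq_empty.mp h
  · exfalso
    have hμB : μ (Bset T g q) = 1 := by
      rw [measure_congr h, measure_univ]
    set h' : α → ℝ := fun z => g z - q with hh'
    have hh'meas : Measurable h' := hg.sub measurable_const
    have hh'b : ∀ z, |h' z| ≤ 1 + |(q : ℝ)| := by
      intro z
      have := hg0 z; have := hg1 z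
      rw [abs_le]
      constructor <;> cases abs_cases (q : ℝ) <;> simp [hh'] <;> linarith [abs_nonneg (q:ℝ), le_abs_self (q:ℝ), neg_abs_le (q:ℝ)]
    have hh'Int : Integrable h' μ := integrable_of_bounded hh'meas hh'b
    set AA : ℕ → Set α := fun N => {z | 0 < maxS T h' N z} with hAA
    have hAAmeas : ∀ N, MeasurableSet (AA N) := fun N =>
      measurableSet_lt measurable_const (measurable_maxS hh'meas hT.toMeasurePreserving.measurable N)
    have hAAmono : Monotone AA := by
      intro N M hNM z hz
      exact lt_of_lt_of_le hz (maxS_mono h' z hNM)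
    have hmax : ∀ N, 0 ≤ ∫ z in AA N, h' z ∂μ := fun N =>
      maximal_ergodic hT.toMeasurePreserving hh'meas (by positivity) hh'b N
    have htend := tendsto_setIntegral_of_monotone hAAmeas hAAmono hh'Int.integrableOn
    have hU : 0 ≤ ∫ z in ⋃ N, AA N, h' z ∂μ := ge_of_tendsto' htend hmax
    have hBU : Bset T g q ⊆ ⋃ N, AA N := by
      rintro w ⟨q', hq', H⟩
      obtain ⟨n, hn1, hn⟩ := H 1
      refine Set.mem_iUnion.mpr ⟨n, ?_⟩
      have hS : 0 < birkhoffSum T h' n w := by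
        rw [hh'] at *
        rw [birkhoffSum_sub_const]
        have hqq' : (q : ℝ) < q' := by exact_mod_cast hq'
        have hn' : (1:ℝ) ≤ n := by exact_mod_cast hn1
        nlinarith
      exact lt_of_lt_of_le hS (le_maxS h' n w n le_rfl)
    have hμU : μ (⋃ N, AA N) = 1 := by
      refine le_antisymm prob_le_one ?_
      rw [← hμB]
      exact measure_mono hBU
    have hUmeas : MeasurableSet (⋃ N, AA N) := MeasurableSet.iUnion hAAmeas
    have hcompl0 : μ (⋃ N, AA N)ᶜ = 0 := by
      rw [measure_compl hUmeas (measure_ne_top μ _), hμU, measure_univ, tsub_self]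
    have hsplit : ∫ z, h' z ∂μ = ∫ z in ⋃ N, AA N, h' z ∂μ := by
      have := integral_add_compl hUmeas hh'Int
      rw [setIntegral_measure_zero _ hcompl0] at this
      linarith
    have hInt : ∫ z, h' z ∂μ = (∫ z, g z ∂μ) - q := by
      rw [hh', integral_sub (integrable_of_bounded hg (C := 1)
        (fun z => abs_le.mpr ⟨by linarith [hg0 z], hg1 z⟩)) (integrable_const _),
        integral_const]
      simp
    rw [hsplit] at hInt
    linarith

lemma birkhoffSum_one_sub (g : α → ℝ) (n : ℕ) (w : α) :
    birkhoffSum T (fun z => 1 - g z) n w = n - birkhoffSum T g n w := by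
  unfold birkhoffSum
  rw [Finset.sum_sub_distrib, Finset.sum_const, Finset.card_range, nsmul_eq_mul, mul_one]

lemma not_Bset {g : α → ℝ} {q q' : ℚ} {w : α} (hw : w ∉ Bset T g q) (hqq' : q < q') :
    ∃ N : ℕ, ∀ n, N ≤ n → birkhoffSum T g n w ≤ (q' : ℝ) * n := by
  by_contra hcon
  push_neg at hcon
  refine hw ⟨q', hqq', fun N => ?_⟩
  obtain ⟨n, hn1, hn2⟩ := hcon N
  exact ⟨n, hn1, hn2⟩

/-- Birkhoff's pointwise ergodic theorem for `[0,1]`-valued functions. -/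
theorem birkhoff01 [IsProbabilityMeasure μ] (hT : Ergodic T μ) {g : α → ℝ}
    (hg : Measurable g) (hg0 : ∀ z, 0 ≤ g z) (hg1 : ∀ z, g z ≤ 1) :
    ∀ᵐ w ∂μ, Tendsto (fun n : ℕ => birkhoffSum T g n w / n) atTop (𝓝 (∫ z, g z ∂μ)) := by
  set c := ∫ z, g z ∂μ with hc
  set g' : α → ℝ := fun z => 1 - g z with hg'
  have hg'meas : Measurable g' := measurable_const.sub hg
  have hg'0 : ∀ z, 0 ≤ g' z := fun z => by simp [hg']; exact hg1 z
  have hg'1 : ∀ z, g' z ≤ 1 := fun z => by simp [hg']; exact hg0 z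
  have hgInt : Integrable g μ := integrable_of_bounded hg
    (fun z => abs_le.mpr ⟨by linarith [hg0 z], hg1 z⟩)
  have hc' : ∫ z, g' z ∂μ = 1 - c := by
    rw [hg', integral_sub (integrable_const _) hgInt, integral_const]
    simp [hc]
  have hupper : ∀ᵐ w ∂μ, ∀ q : ℚ, c < q → w ∉ Bset T g q := by
    rw [ae_all_iff]
    intro q
    by_cases hq : c < q
    · have h0 := Bset_null hT hg hg0 hg1 q hq
      filter_upwards [measure_eq_zero_iff_ae_notMem.mp h0] with w hw
      exact fun _ => hw
    · filter_upwards with w hcq; exact absurd hcq hq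
  have hlower : ∀ᵐ w ∂μ, ∀ q : ℚ, 1 - c < q → w ∉ Bset T g' q := by
    rw [ae_all_iff]
    intro q
    by_cases hq : 1 - c < q
    · have h0 := Bset_null hT hg'meas hg'0 hg'1 q (by rw [hc']; exact hq)
      filter_upwards [measure_eq_zero_iff_ae_notMem.mp h0] with w hw
      exact fun _ => hw
    · filter_upwards with w hcq; exact absurd hcq hq
  filter_upwards [hupper, hlower] with w hw1 hw2
  rw [Metric.tendsto_atTop]
  intro ε hε
  obtain ⟨q', hq'1, hq'2⟩ := exists_rat_btwn (show c < c + ε by linarith)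
  obtain ⟨q, hq1, hq2⟩ := exists_rat_btwn hq'1
  obtain ⟨r', hr'1, hr'2⟩ := exists_rat_btwn (show 1 - c < 1 - c + ε by linarith)
  obtain ⟨r, hr1, hr2⟩ := exists_rat_btwn hr'1
  obtain ⟨N₁, hN₁⟩ := not_Bset (hw1 q (by exact_mod_cast hq1)) (by exact_mod_cast hq2)
  obtain ⟨N₂, hN₂⟩ := not_Bset (hw2 r (by exact_mod_cast hr1)) (by exact_mod_cast hr2)
  refine ⟨max (max N₁ N₂) 1, fun n hn => ?_⟩
  have hn1 : 1 ≤ n := le_trans (le_max_right _ _) hn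
  have hnpos : (0:ℝ) < n := by exact_mod_cast hn1
  have h1 : birkhoffSum T g n w ≤ (q' : ℝ) * n :=
    hN₁ n (le_trans (le_trans (le_max_left _ _) (le_max_left _ _)) hn)
  have h2 : (n:ℝ) - birkhoffSum T g n w ≤ (r' : ℝ) * n := by
    have := hN₂ n (le_trans (le_trans (le_max_right _ _) (le_max_left _ _)) hn)
    rwa [birkhoffSum_one_sub] at this
  rw [Real.dist_eq, abs_sub_lt_iff]
  constructor
  · rw [sub_lt_iff_lt_add]
    calc birkhoffSum T g n w / n ≤ (q' : ℝ) := by rw [div_le_iff₀ hnpos]; linarith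
      _ < c + ε := hq'2
      _ = ε + c := by ring
  · rw [sub_lt_iff_lt_add]
    have : (1 - (r' : ℝ)) ≤ birkhoffSum T g n w / n := by
      rw [le_div_iff₀ hnpos]; nlinarith
    nlinarith [hr'2]

/-- Birkhoff's theorem for indicator functions. -/
theorem birkhoff_indicator [IsProbabilityMeasure μ] (hT : Ergodic T μ) {s : Set α}
    (hs : MeasurableSet s) :
    ∀ᵐ w ∂μ, Tendsto (fun n : ℕ =>
      (∑ i ∈ Finset.range n, s.indicator (fun _ => (1:ℝ)) (T^[i] w)) / n) atTop
      (𝓝 (μ s).toReal) := by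
  have h0 : ∀ z, 0 ≤ s.indicator (fun _ => (1:ℝ)) z := fun z =>
    Set.indicator_nonneg (fun _ _ => zero_le_one) z
  have h1 : ∀ z, s.indicator (fun _ => (1:ℝ)) z ≤ 1 := fun z => by
    by_cases hz : z ∈ s <;> simp [Set.indicator_apply, hz]
  have hmeas : Measurable (s.indicator (fun _ => (1:ℝ))) := measurable_const.indicator hs
  have hint : ∫ z, s.indicator (fun _ => (1:ℝ)) z ∂μ = (μ s).toReal := by
    exact integral_indicator_one (μ := μ) hs
  have := birkhoff01 hT hmeas h0 h1
  rw [hint] at this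
  exact this

end Birkhoff



section Assembly
variable {A : Type*} [DecidableEq A] [MeasurableSpace A] [MeasurableSingletonClass A] (x : A)

/-- one-sided cylinder of `m` copies of `x` at coordinates `0, …, m-1`. -/
def cylSet (m : ℕ) : Set (ℤ → A) := {w | ∀ k : ℕ, k < m → w (k : ℤ) = x}

/-- the positions starting an even-length nonzero maximal `x`-run. -/
def Eset : Set (ℤ → A) :=
  {w | ∃ m : ℕ, Even m ∧ m ≠ 0 ∧ (∀ k : ℕ, k < m → w (k : ℤ) = x) ∧ w (m : ℤ) ≠ x}

lemma measurable_coord (i : ℤ) : MeasurableSet {w : ℤ → A | w i = x} := by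
  have : {w : ℤ → A | w i = x} = (fun w : ℤ → A => w i) ⁻¹' {x} := rfl
  rw [this]
  exact (measurable_pi_apply i) (measurableSet_singleton x)

lemma cylSet_measurable (m : ℕ) : MeasurableSet (cylSet x m) := by
  have : cylSet x m = ⋂ (k : ℕ), ⋂ (_ : k < m), {w : ℤ → A | w (k : ℤ) = x} := by
    ext w; simp [cylSet]
  rw [this]
  exact MeasurableSet.iInter fun k => MeasurableSet.iInter fun _ => measurable_coord x _

lemma Eset_measurable : MeasurableSet (Eset x) := by
  have : Eset x = ⋃ (m : ℕ), ⋃ (_ : Even m) , ⋃ (_ : m ≠ 0),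
      ((⋂ (k : ℕ), ⋂ (_ : k < m), {w : ℤ → A | w (k : ℤ) = x}) ∩ {w : ℤ → A | w (m : ℤ) = x}ᶜ) := by
    ext w; simp [Eset]; tauto
  rw [this]
  refine MeasurableSet.iUnion fun m => MeasurableSet.iUnion fun _ => MeasurableSet.iUnion fun _ =>
    MeasurableSet.inter ?_ (measurable_coord x _).compl
  exact MeasurableSet.iInter fun k => MeasurableSet.iInter fun _ => measurable_coord x _

lemma cylSet_antitone : Antitone (cylSet x) := by
  intro m m' h w hw k hk
  exact hw k (lt_of_lt_of_le hk h)

lemma cyl_replicate (m : ℕ) : cyl (List.replicate m x) = cylSet x m := by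
  ext w
  constructor
  · intro h k hk
    have := h ⟨k, by simpa using hk⟩
    simpa using this
  · intro h i
    have hi : (i : ℕ) < m := by have := i.2; simpa using this
    simp only [List.get_eq_getElem, List.getElem_replicate]
    exact h i hi

lemma measurable_shift : Measurable (shift : (ℤ → A) → (ℤ → A)) :=
  measurable_pi_lambda _ (fun i => measurable_pi_apply (i + 1))

lemma shift_iter (i : ℕ) (w : ℤ → A) (j : ℤ) : (shift^[i] w) j = w (j + i) := by
  induction i generalizing w j with
  | zero => simp
  | succ i ih =>
    rw [Function.iterate_succ_apply]
    rw [ih (shift w) j]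
    show w (j + i + 1) = w (j + (i + 1 : ℕ))
    congr 1
    push_cast
    ring

lemma mem_cylSet_shift (w : ℤ → A) (i K : ℕ) :
    shift^[i] w ∈ cylSet x K ↔ ∀ k : ℕ, k < K → w ((i + k : ℕ) : ℤ) = x := by
  unfold cylSet
  constructor
  · intro h k hk
    have := h k hk
    rw [shift_iter] at this
    convert this using 2
    push_cast; ring
  · intro h k hk
    rw [shift_iter]
    have := h k hk
    convert this using 2
    push_cast; ring

lemma mem_Eset_shift (w : ℤ → A) (i : ℕ) :
    shift^[i] w ∈ Eset x ↔ ∃ m : ℕ, Even m ∧ m ≠ 0 ∧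
      (∀ k : ℕ, k < m → w ((i + k : ℕ) : ℤ) = x) ∧ w ((i + m : ℕ) : ℤ) ≠ x := by
  unfold Eset
  constructor
  · rintro ⟨m, h1, h2, h3, h4⟩
    refine ⟨m, h1, h2, fun k hk => ?_, ?_⟩
    · have := h3 k hk; rw [shift_iter] at this; convert this using 2; push_cast; ring
    · rw [shift_iter] at h4; convert h4 using 3; push_cast; ring
  · rintro ⟨m, h1, h2, h3, h4⟩
    refine ⟨m, h1, h2, fun k hk => ?_, ?_⟩
    · rw [shift_iter]; have := h3 k hk; convert this using 2; push_cast; ring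
    · rw [shift_iter]; convert h4 using 3; push_cast; ring

lemma wordOf_eq (w : ℤ → A) (n : ℕ) :
    wordOf w n = (List.range n).map (fun i : ℕ => w ((i : ℕ) : ℤ)) := by
  unfold wordOf
  induction n with
  | zero => rfl
  | succ n ih => rw [List.range_succ]; simp_all

lemma wordOf_get? (w : ℤ → A) (n j : ℕ) :
    (wordOf w n)[j]? = if j < n then some (w (j : ℤ)) else none := by
  rw [wordOf_eq, List.getElem?_map]
  by_cases h : j < n
  · rw [List.getElem?_range h, if_pos h]
    rfl
  · rw [if_neg h, List.getElem?_eq_none (by simpa using Nat.le_of_not_lt h)]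
    rfl

lemma wordOf_length (w : ℤ → A) (n : ℕ) : (wordOf w n).length = n := by
  rw [wordOf_eq, List.length_map, List.length_range]

lemma drop_wordOf_get? (w : ℤ → A) (n i k : ℕ) :
    ((wordOf w n).drop i)[k]? = if i + k < n then some (w ((i + k : ℕ) : ℤ)) else none := by
  rw [List.getElem?_drop, wordOf_get?]

/-- in the good case (the run starting at `i` does not reach the right edge `n`),
the word statistic agrees with the two-sided one. -/
lemma chi_eq_one_iff_mem (w : ℤ → A) (n i : ℕ)
    (hgood : ∃ j : ℕ, i ≤ j ∧ j < n ∧ w (j : ℤ) ≠ x) :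
    chi x ((wordOf w n).drop i) = 1 ↔ shift^[i] w ∈ Eset x := by
  obtain ⟨j, hj1, hj2, hj3⟩ := hgood
  rw [chi_eq_one_iff, mem_Eset_shift]
  constructor
  · rintro ⟨m, h1, h2, h3, h4⟩
    have hlt : ∀ k, k < m → (i + k < n ∧ w ((i + k : ℕ) : ℤ) = x) := by
      intro k hk
      have := h3 k hk
      rw [drop_wordOf_get?] at this
      by_cases hin : i + k < n
      · rw [if_pos hin] at this; exact ⟨hin, Option.some_injective _ this⟩
      · rw [if_neg hin] at this; exact absurd this (by simp)
    have him : i + m < n := by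
      by_contra him
      -- then j = i + (j - i) with j - i < m, contradicting w j = x
      have hjm : j - i < m := by omega
      have := (hlt _ hjm).2
      rw [show i + (j - i) = j by omega] at this
      exact hj3 this
    refine ⟨m, h1, h2, fun k hk => (hlt k hk).2, ?_⟩
    rw [drop_wordOf_get?, if_pos him] at h4
    intro hc; exact h4 (by rw [hc])
  · rintro ⟨m, h1, h2, h3, h4⟩
    have hjm : m ≤ j - i := by
      by_contra hc
      exact hj3 (by have := h3 (j - i) (by omega); rwa [show i + (j - i) = j by omega] at this)
    have him : i + m < n := by omega
    refine ⟨m, h1, h2, fun k hk => ?_, ?_⟩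
    · rw [drop_wordOf_get?, if_pos (by omega)]
      rw [h3 k hk]
    · rw [drop_wordOf_get?, if_pos him]
      intro hc
      exact h4 (Option.some_injective _ hc)

lemma chi_zero_or_one (v : List A) : chi x v = 0 ∨ chi x v = 1 := by
  unfold chi; split <;> simp

/-- per-position comparison. -/
lemma chi_vs_indicator (w : ℤ → A) (n i K : ℕ) (hi : i < n) :
    |(chi x ((wordOf w n).drop i) : ℝ) - (Eset x).indicator (fun _ => (1:ℝ)) (shift^[i] w)| ≤
      (cylSet x K).indicator (fun _ => (1:ℝ)) (shift^[i] w) + (if i + K ≤ n then 0 else 1) := by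
  have hind0 : (0:ℝ) ≤ (cylSet x K).indicator (fun _ => (1:ℝ)) (shift^[i] w) :=
    Set.indicator_nonneg (fun _ _ => zero_le_one) _
  by_cases hgood : ∃ j : ℕ, i ≤ j ∧ j < n ∧ w (j : ℤ) ≠ x
  · have hiff := chi_eq_one_iff_mem x w n i hgood
    have heq : (chi x ((wordOf w n).drop i) : ℝ)
        = (Eset x).indicator (fun _ => (1:ℝ)) (shift^[i] w) := by
      rcases chi_zero_or_one x ((wordOf w n).drop i) with h | h
      · rw [h, Set.indicator_of_notMem]
        · simp
        · intro hmem; rw [← hiff] at hmem; omega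
      · rw [h, Set.indicator_of_mem (hiff.mp h)]
        simp
    rw [heq, sub_self, abs_zero]
    positivity
  · push_neg at hgood
    have habs : |(chi x ((wordOf w n).drop i) : ℝ)
        - (Eset x).indicator (fun _ => (1:ℝ)) (shift^[i] w)| ≤ 1 := by
      have h1 : (0:ℝ) ≤ (Eset x).indicator (fun _ => (1:ℝ)) (shift^[i] w) :=
        Set.indicator_nonneg (fun _ _ => zero_le_one) _
      have h2 : (Eset x).indicator (fun _ => (1:ℝ)) (shift^[i] w) ≤ 1 := by
        by_cases hz : shift^[i] w ∈ Eset x <;> simp [Set.indicator_apply, hz]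
      have h3 : (0:ℝ) ≤ (chi x ((wordOf w n).drop i) : ℝ) := by positivity
      have h4 : (chi x ((wordOf w n).drop i) : ℝ) ≤ 1 := by
        exact_mod_cast chi_le_one x ((wordOf w n).drop i)
      rw [abs_le]; constructor <;> linarith
    by_cases hK : i + K ≤ n
    · have hmem : shift^[i] w ∈ cylSet x K := by
        rw [mem_cylSet_shift]
        intro k hk
        exact hgood (i + k) (by omega) (by omega)
      rw [Set.indicator_of_mem hmem, if_pos hK]
      simpa using habs
    · rw [if_neg hK]
      linarith

lemma boundary_sum_le (n K : ℕ) :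
    ∑ i ∈ Finset.range n, (if i + K ≤ n then (0:ℝ) else 1) ≤ K := by
  have hsubset : (Finset.range n).filter (fun i => ¬ (i + K ≤ n)) ⊆ Finset.Ico (n - K) n := by
    intro i hi
    simp only [Finset.mem_filter, Finset.mem_range, not_le, Finset.mem_Ico] at *
    omega
  calc ∑ i ∈ Finset.range n, (if i + K ≤ n then (0:ℝ) else 1)
      = ∑ i ∈ Finset.range n, (if ¬ (i + K ≤ n) then (1:ℝ) else 0) := by
        apply Finset.sum_congr rfl; intro i _; by_cases h : i + K ≤ n <;> simp [h]
    _ = ((Finset.range n).filter (fun i => ¬ (i + K ≤ n))).card := by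
        rw [Finset.sum_boole]
    _ ≤ (Finset.Ico (n - K) n).card := by exact_mod_cast Finset.card_le_card hsubset
    _ ≤ K := by rw [Nat.card_Ico]; exact_mod_cast (by omega : n - (n - K) ≤ K)

/-- the master comparison of the word statistic with the Birkhoff sums. -/
lemma RR_vs_birkhoff (w : ℤ → A) (n K : ℕ) :
    |(RR x (wordOf w n) : ℝ) - ∑ i ∈ Finset.range n, (Eset x).indicator (fun _ => (1:ℝ)) (shift^[i] w)| ≤
      K + ∑ i ∈ Finset.range n, (cylSet x K).indicator (fun _ => (1:ℝ)) (shift^[i] w) := by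
  have hRR : (RR x (wordOf w n) : ℝ) = ∑ i ∈ Finset.range n, (chi x ((wordOf w n).drop i) : ℝ) := by
    rw [RR_eq_sum]
    push_cast
    rw [wordOf_length]
  rw [hRR, ← Finset.sum_sub_distrib]
  calc |∑ i ∈ Finset.range n, ((chi x ((wordOf w n).drop i) : ℝ)
          - (Eset x).indicator (fun _ => (1:ℝ)) (shift^[i] w))|
      ≤ ∑ i ∈ Finset.range n, |(chi x ((wordOf w n).drop i) : ℝ)
          - (Eset x).indicator (fun _ => (1:ℝ)) (shift^[i] w)| := Finset.abs_sum_le_sum_abs _ _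
    _ ≤ ∑ i ∈ Finset.range n, ((cylSet x K).indicator (fun _ => (1:ℝ)) (shift^[i] w)
          + (if i + K ≤ n then 0 else 1)) := by
        apply Finset.sum_le_sum
        intro i hi
        exact chi_vs_indicator x w n i K (Finset.mem_range.mp hi)
    _ = (∑ i ∈ Finset.range n, (cylSet x K).indicator (fun _ => (1:ℝ)) (shift^[i] w))
          + ∑ i ∈ Finset.range n, (if i + K ≤ n then (0:ℝ) else 1) := Finset.sum_add_distrib
    _ ≤ (∑ i ∈ Finset.range n, (cylSet x K).indicator (fun _ => (1:ℝ)) (shift^[i] w)) + K := by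
        linarith [boundary_sum_le n K]
    _ = K + ∑ i ∈ Finset.range n, (cylSet x K).indicator (fun _ => (1:ℝ)) (shift^[i] w) := by ring

end Assembly


section Assembly2
variable {A : Type*} [DecidableEq A] [MeasurableSpace A] [MeasurableSingletonClass A] (x : A)
variable (μ : Measure (ℤ → A)) [IsProbabilityMeasure μ]

lemma eq_dirac_of (hpres : MeasurePreserving (shift : (ℤ → A) → (ℤ → A)) μ μ)
    (h : μ {w : ℤ → A | w (0:ℤ) = x} = 1) : μ = Measure.dirac (fun _ : ℤ => x) := by
  have hCmeas : ∀ i : ℤ, MeasurableSet {w : ℤ → A | w i = x} := measurable_coord x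
  have hstep : ∀ i : ℤ, μ {w : ℤ → A | w (i+1) = x} = μ {w : ℤ → A | w i = x} := by
    intro i
    have hpre : shift ⁻¹' {w : ℤ → A | w i = x} = {w : ℤ → A | w (i+1) = x} := rfl
    rw [← hpre]
    exact hpres.measure_preimage (hCmeas i).nullMeasurableSet
  have hall : ∀ i : ℤ, μ {w : ℤ → A | w i = x} = 1 := by
    intro i
    induction i using Int.induction_on with
    | zero => exact h
    | succ i ih => rw [hstep (i:ℤ)]; exact ih
    | pred i ih =>
      have h2 := hstep (-(i:ℤ) - 1)
      rw [show (-(i:ℤ) - 1 + 1) = -(i:ℤ) by ring] at h2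
      rw [← h2]; exact ih
  have hInter : ⋂ i : ℤ, {w : ℤ → A | w i = x} = {fun _ => x} := by
    ext w
    simp only [Set.mem_iInter, Set.mem_setOf_eq, Set.mem_singleton_iff]
    constructor
    · intro h'; funext i; exact h' i
    · intro h' i; rw [h']
  have hImeas : MeasurableSet ({fun _ => x} : Set (ℤ → A)) := by
    rw [← hInter]; exact MeasurableSet.iInter hCmeas
  have hsingle : μ {fun _ : ℤ => x} = 1 := by
    rw [← hInter]
    have hc : μ (⋂ i : ℤ, {w : ℤ → A | w i = x})ᶜ = 0 := by
      rw [Set.compl_iInter]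
      refine measure_iUnion_null fun i => ?_
      rw [measure_compl (hCmeas i) (measure_ne_top μ _), hall i, measure_univ, tsub_self]
    have h2 := measure_compl (MeasurableSet.iInter hCmeas) (measure_ne_top μ _)
    rw [hc, measure_univ] at h2
    have hle : (1:ENNReal) ≤ μ (⋂ i : ℤ, {w : ℤ → A | w i = x}) := by
      rwa [eq_comm, tsub_eq_zero_iff_le] at h2
    exact le_antisymm prob_le_one hle
  refine Measure.ext fun s hs => ?_
  rw [Measure.dirac_apply' _ hs]
  by_cases hp : (fun _ : ℤ => x) ∈ s
  · rw [Set.indicator_of_mem hp]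
    refine le_antisymm prob_le_one ?_
    calc (1:ENNReal) = μ {fun _ : ℤ => x} := hsingle.symm
      _ ≤ μ s := measure_mono (Set.singleton_subset_iff.mpr hp)
  · rw [Set.indicator_of_notMem hp]
    have hsub : s ⊆ {fun _ : ℤ => x}ᶜ := by
      intro z hz hzmem
      rw [Set.mem_singleton_iff] at hzmem
      exact hp (hzmem ▸ hz)
    refine le_antisymm ?_ (by simp)
    calc μ s ≤ μ {fun _ : ℤ => x}ᶜ := measure_mono hsub
      _ = 1 - 1 := by rw [measure_compl hImeas (measure_ne_top μ _), hsingle, measure_univ]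
      _ = 0 := by simp

lemma mu_coord_lt (hμ : Ergodic shift μ) (hne : μ ≠ Measure.dirac (fun _ : ℤ => x)) :
    μ {w : ℤ → A | w (0:ℤ) = x} < 1 :=
  lt_of_le_of_ne prob_le_one (fun h => hne (eq_dirac_of x μ hμ.toMeasurePreserving h))

lemma mu_cylSet_tendsto_zero (hμ : Ergodic shift μ) (hne : μ ≠ Measure.dirac (fun _ : ℤ => x)) :
    Tendsto (fun m : ℕ => μ (cylSet x m)) atTop (𝓝 0) := by
  set Binf : Set (ℤ → A) := {w | ∀ k : ℕ, w (k:ℤ) = x} with hBinf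
  have hBmeas : MeasurableSet Binf := by
    have h2 : Binf = ⋂ k : ℕ, {w : ℤ → A | w (k:ℤ) = x} := by ext w; simp [hBinf]
    rw [h2]; exact MeasurableSet.iInter fun k => measurable_coord x _
  have hsub : Binf ⊆ shift ⁻¹' Binf := by
    intro w hw k
    show w ((k:ℤ)+1) = x
    have h2 := hw (k+1)
    rwa [show (((k+1:ℕ)):ℤ) = (k:ℤ)+1 by push_cast; ring] at h2
  have h01 := hμ.ae_empty_or_univ_of_ae_le_preimage' hBmeas.nullMeasurableSet
    (HasSubset.Subset.eventuallyLE hsub) (measure_ne_top μ _)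
  have hB0 : μ Binf = 0 := by
    rcases h01 with h | h
    · exact ae_eq_empty.mp h
    · exfalso
      have h1 : μ Binf = 1 := by rw [measure_congr h, measure_univ]
      have hsub0 : Binf ⊆ {w : ℤ → A | w (0:ℤ) = x} := by
        intro w hw
        have h3 := hw 0
        simpa using h3
      have h2 : (1:ENNReal) ≤ μ {w : ℤ → A | w (0:ℤ) = x} := h1 ▸ measure_mono hsub0
      exact (mu_coord_lt x μ hμ hne).not_ge h2
  have hiInter : ⋂ m : ℕ, cylSet x m = Binf := by
    ext w
    simp only [Set.mem_iInter, cylSet, Set.mem_setOf_eq, hBinf]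
    constructor
    · intro h k; exact h (k+1) k (by omega)
    · intro h m k _; exact h k
  have htend := tendsto_measure_iInter_atTop (μ := μ)
    (fun m => (cylSet_measurable x m).nullMeasurableSet) (cylSet_antitone x)
    ⟨0, measure_ne_top μ _⟩
  rw [hiInter, hB0] at htend
  exact htend

lemma mu_cylSet_toReal_tendsto_zero (hμ : Ergodic shift μ)
    (hne : μ ≠ Measure.dirac (fun _ : ℤ => x)) :
    Tendsto (fun m : ℕ => (μ (cylSet x m)).toReal) atTop (𝓝 0) := by
  have h := (ENNReal.tendsto_toReal (a := 0) (by simp)).comp (mu_cylSet_tendsto_zero x μ hμ hne)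
  exact h

end Assembly2


/-- for `x = y` and `μ` not the point mass on the constant sequence of `x`'s,
`μ`-a.e. `n/|G(w₁…wₙ)| → 1/(1 − Σ_{k≥2} (−1)ᵏ μ(xᵏ))`, the alternating series being
understood as the limit `L` of its partial sums. -/
theorem stmt_5 {A : Type*} [Fintype A] [DecidableEq A] [MeasurableSpace A]
    [MeasurableSingletonClass A]
    (x : A) (μ : Measure (ℤ → A)) [IsProbabilityMeasure μ] (hμ : Ergodic shift μ)
    (hne : μ ≠ Measure.dirac (fun _ : ℤ => x)) :
    ∃ L : ℝ,
      Tendsto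
        (fun m : ℕ => ∑ k ∈ Finset.range m,
          (-1 : ℝ) ^ (k + 2) * (μ (cyl (List.replicate (k + 2) x))).toReal)
        atTop (𝓝 L) ∧
      ∀ᵐ w ∂μ, Tendsto
        (fun n : ℕ => (n : ℝ) / ((pairSubst x x (wordOf w n)).length : ℝ))
        atTop (𝓝 (1 / (1 - L))) := by
  classical
  set L : ℝ := (μ (Eset x)).toReal with hLdef
  set a : ℕ → ℝ := fun m => (μ (cylSet x m)).toReal with ha
  have ha_anti : Antitone a := fun m m' h =>
    ENNReal.toReal_mono (measure_ne_top μ _) (measure_mono (cylSet_antitone x h))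
  have ha0 : Tendsto a atTop (𝓝 0) := mu_cylSet_toReal_tendsto_zero x μ hμ hne
  obtain ⟨l, hl⟩ := Antitone.tendsto_alternating_series_of_tendsto_zero
    (f := fun k => a (k+2)) (fun k k' h => ha_anti (by omega))
    (ha0.comp (tendsto_add_atTop_nat 2))
  have hPeq : ∀ m : ℕ, (∑ k ∈ Finset.range m,
      (-1:ℝ)^(k+2) * (μ (cyl (List.replicate (k+2) x))).toReal)
      = ∑ k ∈ Finset.range m, (-1:ℝ)^k * a (k+2) := by
    intro m
    apply Finset.sum_congr rfl
    intro k _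
    rw [cyl_replicate, pow_add]
    norm_num
    rfl
  have hPtend : Tendsto (fun m : ℕ => ∑ k ∈ Finset.range m,
      (-1:ℝ)^(k+2) * (μ (cyl (List.replicate (k+2) x))).toReal) atTop (𝓝 l) :=
    hl.congr fun m => (hPeq m).symm
  -- decomposition of Eset into disjoint differences of cylinders
  set G : ℕ → Set (ℤ → A) := fun j => cylSet x (2*j+2) \ cylSet x (2*j+3) with hGdef
  have hGmeas : ∀ j, MeasurableSet (G j) :=
    fun j => (cylSet_measurable x _).diff (cylSet_measurable x _)
  have hGdisj : Pairwise (Function.onFun Disjoint G) := by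
    have key : ∀ i j : ℕ, i < j → Disjoint (G i) (G j) := by
      intro i j hij
      rw [Set.disjoint_left]
      rintro w ⟨hw1, hw2⟩ ⟨hw1', _⟩
      apply hw2
      intro k hk
      rcases (by omega : k < 2*i+2 ∨ k = 2*i+2) with h | h
      · exact hw1 k h
      · rw [h]; exact hw1' (2*i+2) (by omega)
    intro i j hij
    rcases lt_or_gt_of_ne hij with h | h
    · exact key i j h
    · exact (key j i h).symm
  have hEeq : Eset x = ⋃ j, G j := by
    ext w
    simp only [Eset, Set.mem_setOf_eq, Set.mem_iUnion, hGdef, Set.mem_diff]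
    constructor
    · rintro ⟨m, hme, hm0, h1, h2⟩
      obtain ⟨r, hr⟩ := hme
      refine ⟨r - 1, ?_, ?_⟩
      · intro k hk; exact h1 k (by omega)
      · intro hc
        have h3 := hc (2*(r-1)+2) (by omega)
        rw [show 2*(r-1)+2 = m by omega] at h3
        exact h2 h3
    · rintro ⟨j, hj1, hj2⟩
      refine ⟨2*j+2, ⟨j+1, by ring⟩, by omega, hj1, ?_⟩
      intro hc
      apply hj2
      intro k hk
      rcases (by omega : k < 2*j+2 ∨ k = 2*j+2) with h | h
      · exact hj1 k h
      · rw [h]; exact hc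
  have hμE : μ (Eset x) = ∑' j, μ (G j) := by
    rw [hEeq]; exact measure_iUnion hGdisj hGmeas
  have hEne : μ (Eset x) ≠ ⊤ := measure_ne_top μ _
  have htsum : Tendsto (fun J => ∑ j ∈ Finset.range J, μ (G j)) atTop (𝓝 (μ (Eset x))) := by
    rw [hμE]; exact ENNReal.tendsto_nat_tsum _
  have htoReal : Tendsto (fun J => ∑ j ∈ Finset.range J, (μ (G j)).toReal) atTop (𝓝 L) := by
    have h1 := (ENNReal.tendsto_toReal hEne).comp htsum
    refine h1.congr fun J => ?_
    exact ENNReal.toReal_sum (fun j _ => measure_ne_top μ _)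
  have hGtoReal : ∀ j : ℕ, (μ (G j)).toReal = a (2*j+2) - a (2*j+3) := by
    intro j
    have hsub : cylSet x (2*j+3) ⊆ cylSet x (2*j+2) := cylSet_antitone x (by omega)
    have hd : μ (G j) = μ (cylSet x (2*j+2)) - μ (cylSet x (2*j+3)) :=
      measure_diff hsub (cylSet_measurable x _).nullMeasurableSet (measure_ne_top μ _)
    rw [hd, ENNReal.toReal_sub_of_le (measure_mono hsub) (measure_ne_top μ _)]
  have hparsum : ∀ J : ℕ, ∑ j ∈ Finset.range J, (μ (G j)).toReal
      = ∑ k ∈ Finset.range (2*J), (-1:ℝ)^k * a (k+2) := by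
    intro J
    induction J with
    | zero => simp
    | succ J ih =>
      rw [Finset.sum_range_succ, ih, hGtoReal,
        show 2*(J+1) = (2*J+1)+1 by ring, Finset.sum_range_succ, Finset.sum_range_succ]
      have he : (-1:ℝ)^(2*J) = 1 := Even.neg_one_pow ⟨J, by ring⟩
      have ho : (-1:ℝ)^(2*J+1) = -1 := Odd.neg_one_pow ⟨J, by ring⟩
      rw [he, ho, show 2*J+1+2 = 2*J+3 by ring]
      ring
  have h2J : Tendsto (fun J : ℕ => 2*J) atTop atTop :=
    tendsto_atTop_mono (fun J => by simp only [id]; omega) tendsto_id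
  have hsubseq : Tendsto (fun J : ℕ => ∑ k ∈ Finset.range (2*J), (-1:ℝ)^k * a (k+2))
      atTop (𝓝 l) := hl.comp h2J
  have hlL : l = L := tendsto_nhds_unique hsubseq (htoReal.congr fun J => hparsum J)
  rw [hlL] at hPtend
  refine ⟨L, hPtend, ?_⟩
  -- bounds on L
  have hL0 : 0 ≤ L := ENNReal.toReal_nonneg
  have hL1 : L < 1 := by
    have hsub : Eset x ⊆ {w : ℤ → A | w (0:ℤ) = x} := by
      rintro w ⟨m, hme, hm0, h1, h2⟩
      have h3 := h1 0 (by omega)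
      simpa using h3
    have hlt := mu_coord_lt x μ hμ hne
    calc L ≤ (μ {w : ℤ → A | w (0:ℤ) = x}).toReal :=
          ENNReal.toReal_mono (measure_ne_top μ _) (measure_mono hsub)
      _ < 1 := by
          have h4 := (ENNReal.toReal_lt_toReal (measure_ne_top μ _)
            (by simp : (1:ENNReal) ≠ ⊤)).mpr hlt
          simpa using h4
  -- a.e. part
  have hbE := birkhoff_indicator hμ (Eset_measurable x)
  have hbK : ∀ᵐ w ∂μ, ∀ K : ℕ, Tendsto (fun n : ℕ =>
      (∑ i ∈ Finset.range n, (cylSet x K).indicator (fun _ => (1:ℝ)) (shift^[i] w)) / n)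
      atTop (𝓝 (μ (cylSet x K)).toReal) :=
    ae_all_iff.mpr fun K => birkhoff_indicator hμ (cylSet_measurable x K)
  filter_upwards [hbE, hbK] with w hwE hwK
  have hstep1 : Tendsto (fun n : ℕ => (RR x (wordOf w n) : ℝ) / n) atTop (𝓝 L) := by
    rw [Metric.tendsto_atTop]
    intro ε hε
    obtain ⟨K, hK⟩ : ∃ K : ℕ, a K < ε/4 :=
      (ha0.eventually (gt_mem_nhds (show (0:ℝ) < ε/4 by linarith))).exists
    obtain ⟨N₁, hN₁⟩ := eventually_atTop.mp
      ((tendsto_const_div_atTop_nhds_zero_nat (K:ℝ)).eventually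
        (gt_mem_nhds (show (0:ℝ) < ε/4 by linarith)))
    obtain ⟨N₂, hN₂⟩ := Metric.tendsto_atTop.mp (hwK K) (ε/4) (by linarith)
    obtain ⟨N₃, hN₃⟩ := Metric.tendsto_atTop.mp hwE (ε/4) (by linarith)
    refine ⟨max (max N₁ N₂) (max N₃ 1), fun n hn => ?_⟩
    have hn1 : 1 ≤ n := le_trans (le_trans (le_max_right _ _) (le_max_right _ _)) hn
    have hnpos : (0:ℝ) < n := by exact_mod_cast hn1
    set SE := ∑ i ∈ Finset.range n, (Eset x).indicator (fun _ => (1:ℝ)) (shift^[i] w) with hSE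
    set SK := ∑ i ∈ Finset.range n, (cylSet x K).indicator (fun _ => (1:ℝ)) (shift^[i] w)
      with hSK
    have hcomp : |(RR x (wordOf w n) : ℝ) - SE| ≤ K + SK := RR_vs_birkhoff x w n K
    have hdE : dist (SE / n) L < ε/4 :=
      hN₃ n (le_trans (le_trans (le_max_left _ _) (le_max_right _ _)) hn)
    have hdK : dist (SK / n) (a K) < ε/4 :=
      hN₂ n (le_trans (le_trans (le_max_right _ _) (le_max_left _ _)) hn)
    have hdN : (K:ℝ)/n < ε/4 :=
      hN₁ n (le_trans (le_trans (le_max_left _ _) (le_max_left _ _)) hn)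
    have hSKnonneg : 0 ≤ SK := Finset.sum_nonneg fun i _ =>
      Set.indicator_nonneg (fun _ _ => zero_le_one) _
    rw [Real.dist_eq] at hdE hdK ⊢
    have habs1 : |(RR x (wordOf w n) : ℝ)/n - SE/n| ≤ (K:ℝ)/n + SK/n := by
      rw [div_sub_div_same, abs_div, abs_of_pos hnpos, ← add_div]
      exact div_le_div_of_nonneg_right hcomp hnpos.le
    have htri : |(RR x (wordOf w n) : ℝ)/n - L|
        ≤ |(RR x (wordOf w n) : ℝ)/n - SE/n| + |SE/n - L| := abs_sub_le _ _ _
    have hSKn : SK/n < ε/2 := by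
      have := abs_lt.mp hdK
      linarith
    have := abs_lt.mp hdE
    have habs : |(RR x (wordOf w n) : ℝ)/n - L| < ε := by
      calc |(RR x (wordOf w n) : ℝ)/n - L|
          ≤ ((K:ℝ)/n + SK/n) + |SE/n - L| := le_trans htri (by linarith)
        _ < ε/4 + ε/2 + ε/4 := by linarith
        _ = ε := by ring
    exact habs
  -- final computation
  have hlen : ∀ n : ℕ, ((pairSubst x x (wordOf w n)).length : ℝ) = n - RR x (wordOf w n) := by
    intro n
    have h1 := pairSubst_len x (wordOf w n)
    rw [wordOf_length] at h1
    have h2 : ((pairSubst x x (wordOf w n)).length : ℝ) + RR x (wordOf w n) = n := by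
      exact_mod_cast h1
    linarith
  have hquot : Tendsto (fun n : ℕ => ((pairSubst x x (wordOf w n)).length : ℝ) / n)
      atTop (𝓝 (1 - L)) := by
    have h1 : Tendsto (fun n : ℕ => 1 - (RR x (wordOf w n) : ℝ)/n) atTop (𝓝 (1 - L)) :=
      tendsto_const_nhds.sub hstep1
    refine h1.congr' ?_
    filter_upwards [eventually_ge_atTop 1] with n hn
    have hnpos : (0:ℝ) < n := by exact_mod_cast hn
    rw [hlen n, sub_div, div_self (ne_of_gt hnpos)]
  have h1L : (1:ℝ) - L ≠ 0 := by linarith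
  have hinv := hquot.inv₀ h1L
  have hgoal : Tendsto (fun n : ℕ => (n : ℝ) / ((pairSubst x x (wordOf w n)).length : ℝ))
      atTop (𝓝 ((1 - L)⁻¹)) := by
    refine hinv.congr fun n => ?_
    rw [inv_div]
  rw [show (1:ℝ)/(1-L) = (1-L)⁻¹ by rw [one_div]]
  exact hgoal
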